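/- Let V(q₁,q₂,q₃) = (a₅/2)q₁²q₂ + a₅q₂³ + (1/3)q₃³ with a₅ ≠ 0, and H = (p₁²+p₂²+p₃²)/2 + V. Then I₁ = p₃²/2 + q₃³/3 and I₂ = 8p₁(q₁p₂ − q₂p₁) + a₅q₁²(q₁² + 4q₂²) are both first integrals of H, i.e., {H,I₁} = {H,I₂} = 0 with respect to the canonical Poisson bracket. -/

import Mathlib

set_option maxHeartbeats 1000000


open MvPolynomial

/-- Canonical Poisson bracket on `ℂ⁶` with coordinates
`(q₁,q₂,q₃,p₁,p₂,p₃) = (x₀,…,x₅)`. -/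
noncomputable def poissonBracket (F G : MvPolynomial (Fin 6) ℂ) :
    MvPolynomial (Fin 6) ℂ :=
  ∑ i : Fin 3,
    (pderiv (Fin.castAdd 3 i) F * pderiv (Fin.natAdd 3 i) G
      - pderiv (Fin.natAdd 3 i) F * pderiv (Fin.castAdd 3 i) G)

lemma aux1 (a5 : ℂ) :
    poissonBracket (C (1/2 : ℂ) * (X 3 ^ 2 + X 4 ^ 2 + X 5 ^ 2)
        + C (a5 / 2) * X 0 ^ 2 * X 1 + C a5 * X 1 ^ 3 + C (1/3 : ℂ) * X 2 ^ 3)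
      (C (1/2 : ℂ) * X 5 ^ 2 + C (1/3 : ℂ) * X 2 ^ 3) = 0 := by
  rw [poissonBracket, Fin.sum_univ_three]
  simp only [Fin.isValue, Fin.castAdd, Fin.natAdd, Fin.castLE]
  norm_num
  simp only [Pi.single_apply]
  norm_num [Fin.ext_iff]
  apply MvPolynomial.funext
  intro x
  simp only [map_add, map_sub, map_mul, map_pow, map_neg, map_ofNat, map_zero, map_one,
    eval_C, eval_X]
  norm_num
  ring

lemma aux2 (a5 : ℂ) :
    poissonBracket (C (1/2 : ℂ) * (X 3 ^ 2 + X 4 ^ 2 + X 5 ^ 2)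
        + C (a5 / 2) * X 0 ^ 2 * X 1 + C a5 * X 1 ^ 3 + C (1/3 : ℂ) * X 2 ^ 3)
      (C (8 : ℂ) * X 3 * (X 0 * X 4 - X 1 * X 3)
        + C a5 * X 0 ^ 2 * (X 0 ^ 2 + C (4 : ℂ) * X 1 ^ 2)) = 0 := by
  rw [poissonBracket, Fin.sum_univ_three]
  simp only [Fin.isValue, Fin.castAdd, Fin.natAdd, Fin.castLE]
  norm_num
  simp only [Pi.single_apply]
  norm_num [Fin.ext_iff]
  apply MvPolynomial.funext
  intro x
  simp only [map_add, map_sub, map_mul, map_pow, map_neg, map_ofNat, map_zero, map_one,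
    eval_C, eval_X]
  norm_num
  ring

/-- For `V = (a₅/2)q₁²q₂ + a₅q₂³ + (1/3)q₃³` with `a₅ ≠ 0`,
`I₁ = p₃²/2 + q₃³/3` and `I₂ = 8p₁(q₁p₂ − q₂p₁) + a₅q₁²(q₁² + 4q₂²)` are first
integrals of `H = (p₁²+p₂²+p₃²)/2 + V`. -/
theorem stmt13 (a5 : ℂ) (h : a5 ≠ 0) :
    let H : MvPolynomial (Fin 6) ℂ :=
      C (1/2 : ℂ) * (X 3 ^ 2 + X 4 ^ 2 + X 5 ^ 2)
        + C (a5 / 2) * X 0 ^ 2 * X 1 + C a5 * X 1 ^ 3 + C (1/3 : ℂ) * X 2 ^ 3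
    let I1 : MvPolynomial (Fin 6) ℂ := C (1/2 : ℂ) * X 5 ^ 2 + C (1/3 : ℂ) * X 2 ^ 3
    let I2 : MvPolynomial (Fin 6) ℂ :=
      C (8 : ℂ) * X 3 * (X 0 * X 4 - X 1 * X 3)
        + C a5 * X 0 ^ 2 * (X 0 ^ 2 + C (4 : ℂ) * X 1 ^ 2)
    poissonBracket H I1 = 0 ∧ poissonBracket H I2 = 0 := by
  exact ⟨aux1 a5, aux2 a5⟩
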